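/- Let μ be a probability measure on a measurable space Ω, let X be a random point in Ω distributed according to μ, and let f : Ω → ℝ be measurable with ∫|f(x)| dμ(x) < ∞. Let b₀ ∈ ℝ be a median of f(X), and define the probability measures dμ₁(x) = (2·1{f(x) > b₀} + 2α·1{f(x) = b₀}) dμ(x) and dμ₂(x) = (2·1{f(x) < b₀} + 2(1−α)·1{f(x) = b₀}) dμ(x), where α ∈ [0,1] is chosen so that μ₁(Ω) = μ₂(Ω) = 1 (such α exists). Then (1/2)μ₁ + (1/2)μ₂ = μ and (1/2)|∫ f dμ₁ − ∫ f dμ₂| = inf_{b ∈ ℝ} ∫ |f(x) − b| dμ(x). -/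

import Mathlib

open MeasureTheory
open scoped ENNReal RealInnerProductSpace Classical

noncomputable section

/-- The outer product `x xᵀ` of a vector in Euclidean space, as a matrix. -/
def outer {d : ℕ} (x : EuclideanSpace ℝ (Fin d)) : Matrix (Fin d) (Fin d) ℝ :=
  Matrix.of fun i j => x i * x j

/-- The trace inner product `⟨A, B⟩ = Tr (A B)` on symmetric matrices. -/
def minner {d : ℕ} (A B : Matrix (Fin d) (Fin d) ℝ) : ℝ :=
  Matrix.trace (A * B)

/-- The Frobenius norm of a matrix. -/
def frobNorm {d : ℕ} (M : Matrix (Fin d) (Fin d) ℝ) : ℝ :=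
  Real.sqrt (∑ i, ∑ j, (M i j) ^ 2)

/-- Entrywise integral of a matrix-valued function. -/
def mIntegral {d : ℕ} (μ : Measure (EuclideanSpace ℝ (Fin d)))
    (F : EuclideanSpace ℝ (Fin d) → Matrix (Fin d) (Fin d) ℝ) :
    Matrix (Fin d) (Fin d) ℝ :=
  Matrix.of fun i j => ∫ x, F x i j ∂μ

/-- The fourth moment operator `T_μ (A) = ∫ ⟨A, xxᵀ⟩ xxᵀ dμ(x)`. -/
def fourthMomentOp {d : ℕ} (μ : Measure (EuclideanSpace ℝ (Fin d)))
    (A : Matrix (Fin d) (Fin d) ℝ) : Matrix (Fin d) (Fin d) ℝ :=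
  mIntegral μ (fun x => minner A (outer x) • outer x)

/-- The second moment matrix `B = ∫ xxᵀ dμ(x)`. -/
def secondMoment {d : ℕ} (μ : Measure (EuclideanSpace ℝ (Fin d))) :
    Matrix (Fin d) (Fin d) ℝ :=
  mIntegral μ outer

/-- `lam : ℕ → ℝ` lists the eigenvalues (with multiplicity) of the fourth moment operator
`T_μ`, viewed as an operator on the `d(d+1)/2`-dimensional inner product space of symmetric
matrices, in descending order, padded by `0` beyond index `d(d+1)/2`. -/
def IsEigenSeq {d : ℕ} (μ : Measure (EuclideanSpace ℝ (Fin d))) (lam : ℕ → ℝ) : Prop :=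
  Antitone lam ∧ (∀ i, d * (d + 1) / 2 ≤ i → lam i = 0) ∧
  ∃ b : Fin (d * (d + 1) / 2) → Matrix (Fin d) (Fin d) ℝ,
    (∀ i, (b i).IsSymm) ∧
    (∀ i j, minner (b i) (b j) = if i = j then 1 else 0) ∧
    (∀ A : Matrix (Fin d) (Fin d) ℝ, A.IsSymm → A ∈ Submodule.span ℝ (Set.range b)) ∧
    (∀ i : Fin (d * (d + 1) / 2), fourthMomentOp μ (b i) = lam i • b i)

/-- The second order separation parameter `s(μ)`. -/
def sep {d : ℕ} (μ : Measure (EuclideanSpace ℝ (Fin d))) : ℝ :=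
  (1 / 2) * sSup { r : ℝ | ∃ μ₁ μ₂ : Measure (EuclideanSpace ℝ (Fin d)),
    IsProbabilityMeasure μ₁ ∧ IsProbabilityMeasure μ₂ ∧
    μ = (2 : ℝ≥0∞)⁻¹ • μ₁ + (2 : ℝ≥0∞)⁻¹ • μ₂ ∧
    r = frobNorm (secondMoment μ₁ - secondMoment μ₂) }

/-- The standard Gaussian measure `N(0, I)` on `ℝ^d`. -/
def stdGaussian (d : ℕ) : Measure (EuclideanSpace ℝ (Fin d)) :=
  (Measure.pi fun _ : Fin d => ProbabilityTheory.gaussianReal 0 1).map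
    (MeasurableEquiv.toLp 2 (Fin d → ℝ))

/-- The centered Gaussian measure `N(0, B)` on `ℝ^d` with positive semidefinite
covariance matrix `B`, obtained as the pushforward of `N(0, I)` by `B^{1/2}`. -/
def gaussianCov {d : ℕ} (B : Matrix (Fin d) (Fin d) ℝ) :
    Measure (EuclideanSpace ℝ (Fin d)) :=
  if hB : B.PosSemidef then (stdGaussian d).map (fun x => Matrix.toEuclideanLin
    (hB.1.eigenvectorUnitary.1 * Matrix.diagonal ((↑) ∘ Real.sqrt ∘ hB.1.eigenvalues) *
      (star hB.1.eigenvectorUnitary : Matrix (Fin d) (Fin d) ℝ)) x)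
  else 0

/-- The positive semidefinite square root `B^{1/2}` of a positive semidefinite matrix. -/
def psdSqrt {d : ℕ} (B : Matrix (Fin d) (Fin d) ℝ) : Matrix (Fin d) (Fin d) ℝ :=
  if hB : B.PosSemidef then
    hB.1.eigenvectorUnitary.1 * Matrix.diagonal ((↑) ∘ Real.sqrt ∘ hB.1.eigenvalues) *
      (star hB.1.eigenvectorUnitary : Matrix (Fin d) (Fin d) ℝ) else 0

lemma int_cmul {Ω : Type*} [MeasurableSpace Ω] (μ : Measure Ω) (c : ℝ) (g : Ω → ℝ) :
    ∫ x, c * g x ∂μ = c * ∫ x, g x ∂μ := by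
  simpa using integral_smul (μ := μ) c g

lemma median_key {Ω : Type*} [MeasurableSpace Ω] (μ : Measure Ω) [IsProbabilityMeasure μ]
    (f : Ω → ℝ) (hf : Measurable f) (hint : Integrable f μ) (b₀ b : ℝ) (hb : b₀ ≤ b)
    (hmed : (2 : ℝ≥0∞)⁻¹ ≤ μ {x | f x ≤ b₀}) :
    ∫ x, |f x - b₀| ∂μ ≤ ∫ x, |f x - b| ∂μ := by
  set S : Set Ω := {x | f x ≤ b₀} with hSdef
  have hS : MeasurableSet S := measurableSet_le hf measurable_const
  set K : Ω → ℝ := fun x => S.indicator (fun _ => (2:ℝ)) x - 1 with hKdef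
  have hKint : Integrable K μ := ((integrable_const (2:ℝ)).indicator hS).sub (integrable_const 1)
  have hKval : ∫ x, K x ∂μ = 2 * (μ S).toReal - 1 := by
    rw [hKdef]
    rw [integral_sub ((integrable_const (2:ℝ)).indicator hS) (integrable_const 1),
      integral_indicator_const (2:ℝ) hS]
    simp [mul_comm, measureReal_def]
  have hSr : (1:ℝ)/2 ≤ (μ S).toReal := by
    have h1 : μ S ≠ ⊤ := (measure_lt_top μ S).ne
    have := ENNReal.toReal_mono h1 hmed
    simpa using this
  have hKnn : 0 ≤ ∫ x, K x ∂μ := by rw [hKval]; linarith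
  have hpt : ∀ x, (b - b₀) * K x ≤ |f x - b| - |f x - b₀| := by
    intro x
    by_cases hx : x ∈ S
    · have hx' : f x ≤ b₀ := hx
      rw [hKdef]
      simp only [Set.indicator_of_mem hx]
      rw [abs_of_nonpos (by linarith : f x - b ≤ 0), abs_of_nonpos (by linarith : f x - b₀ ≤ 0)]
      ring_nf
      linarith
    · have hx' : b₀ < f x := lt_of_not_ge hx
      rw [hKdef]
      simp only [Set.indicator_of_notMem hx]
      rw [abs_of_nonneg (by linarith : 0 ≤ f x - b₀)]
      have := le_abs_self (f x - b)
      linarith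
  have hint1 : Integrable (fun x => |f x - b|) μ := (hint.sub (integrable_const b)).abs
  have hint0 : Integrable (fun x => |f x - b₀|) μ := (hint.sub (integrable_const b₀)).abs
  have := integral_mono (hKint.const_mul (b - b₀)) (hint1.sub hint0) hpt
  simp only [Pi.sub_apply] at this
  rw [integral_sub hint1 hint0] at this
  have hsm : ∫ a, (b - b₀) * K a ∂μ = (b - b₀) * ∫ a, K a ∂μ := by
    simpa using integral_smul (b - b₀) K (μ := μ)
  rw [hsm] at this
  nlinarith [mul_nonneg (by linarith : (0:ℝ) ≤ b - b₀) hKnn]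

/-- splitting a probability measure at a median `b₀` of `f` gives an equal
weight decomposition achieving `inf_b ∫ |f - b| dμ`. -/
theorem median_split
    {Ω : Type*} [MeasurableSpace Ω] (μ : Measure Ω) [IsProbabilityMeasure μ]
    (f : Ω → ℝ) (hf : Measurable f) (hint : Integrable f μ)
    (b₀ : ℝ) (hmed1 : (2 : ℝ≥0∞)⁻¹ ≤ μ {x | b₀ ≤ f x})
    (hmed2 : (2 : ℝ≥0∞)⁻¹ ≤ μ {x | f x ≤ b₀})
    (α : ℝ) (hα0 : 0 ≤ α) (hα1 : α ≤ 1)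
    (μ₁ μ₂ : Measure Ω)
    (hμ₁ : μ₁ = μ.withDensity fun x =>
      if b₀ < f x then 2 else if f x = b₀ then ENNReal.ofReal (2 * α) else 0)
    (hμ₂ : μ₂ = μ.withDensity fun x =>
      if f x < b₀ then 2 else if f x = b₀ then ENNReal.ofReal (2 * (1 - α)) else 0)
    (h1 : μ₁ Set.univ = 1) (h2 : μ₂ Set.univ = 1) :
    (2 : ℝ≥0∞)⁻¹ • μ₁ + (2 : ℝ≥0∞)⁻¹ • μ₂ = μ ∧
      (1 / 2) * |(∫ x, f x ∂μ₁) - ∫ x, f x ∂μ₂| = ⨅ b : ℝ, ∫ x, |f x - b| ∂μ := by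
  have hEq : MeasurableSet {x | f x = b₀} := hf (measurableSet_singleton b₀)
  set d₁ : Ω → ℝ≥0∞ := fun x =>
    if b₀ < f x then 2 else if f x = b₀ then ENNReal.ofReal (2 * α) else 0 with hd₁def
  set d₂ : Ω → ℝ≥0∞ := fun x =>
    if f x < b₀ then 2 else if f x = b₀ then ENNReal.ofReal (2 * (1 - α)) else 0 with hd₂def
  have hd₁ : Measurable d₁ :=
    Measurable.ite (measurableSet_lt measurable_const hf) measurable_const
      (Measurable.ite hEq measurable_const measurable_const)
  have hd₂ : Measurable d₂ :=
    Measurable.ite (measurableSet_lt hf measurable_const) measurable_const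
      (Measurable.ite hEq measurable_const measurable_const)
  -- Part 1
  have part1 : (2 : ℝ≥0∞)⁻¹ • μ₁ + (2 : ℝ≥0∞)⁻¹ • μ₂ = μ := by
    rw [hμ₁, hμ₂, ← withDensity_smul _ hd₁, ← withDensity_smul _ hd₂,
      ← withDensity_add_left (hd₁.const_smul (2:ℝ≥0∞)⁻¹) (((2:ℝ≥0∞)⁻¹) • d₂)]
    have hone : (2:ℝ≥0∞)⁻¹ • d₁ + ((2:ℝ≥0∞)⁻¹) • d₂ = fun _ => (1:ℝ≥0∞) := by
      funext x
      simp only [Pi.add_apply, Pi.smul_apply, smul_eq_mul, hd₁def, hd₂def]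
      rcases lt_trichotomy (f x) b₀ with h | h | h
      · rw [if_neg (by linarith), if_neg (by linarith), if_pos h]
        simpa using ENNReal.inv_mul_cancel (two_ne_zero (α := ℝ≥0∞)) ENNReal.ofNat_ne_top
      · rw [if_neg (by simp [h]), if_pos h, if_neg (by simp [h]), if_pos h,
          ← mul_add, ← ENNReal.ofReal_add (by linarith) (by linarith)]
        rw [show 2 * α + 2 * (1 - α) = 2 by ring]
        rw [ENNReal.ofReal_ofNat]
        simpa using ENNReal.inv_mul_cancel (two_ne_zero (α := ℝ≥0∞)) ENNReal.ofNat_ne_top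
      · rw [if_pos h, if_neg (by linarith), if_neg (by linarith)]
        simpa using ENNReal.inv_mul_cancel (two_ne_zero (α := ℝ≥0∞)) ENNReal.ofNat_ne_top
    rw [hone]
    exact withDensity_one (μ := μ)
  refine ⟨part1, ?_⟩
  -- NNReal densities
  set c₁ : Ω → NNReal := fun x =>
    if b₀ < f x then 2 else if f x = b₀ then Real.toNNReal (2 * α) else 0 with hc₁def
  set c₂ : Ω → NNReal := fun x =>
    if f x < b₀ then 2 else if f x = b₀ then Real.toNNReal (2 * (1 - α)) else 0 with hc₂def
  have hc₁ : Measurable c₁ :=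
    Measurable.ite (measurableSet_lt measurable_const hf) measurable_const
      (Measurable.ite hEq measurable_const measurable_const)
  have hc₂ : Measurable c₂ :=
    Measurable.ite (measurableSet_lt hf measurable_const) measurable_const
      (Measurable.ite hEq measurable_const measurable_const)
  have hco₁ : μ₁ = μ.withDensity fun x => (c₁ x : ENNReal) := by
    rw [hμ₁]; congr 1; funext x
    simp only [hd₁def, hc₁def]
    split_ifs <;> simp [ENNReal.ofReal]
  have hco₂ : μ₂ = μ.withDensity fun x => (c₂ x : ENNReal) := by
    rw [hμ₂]; congr 1; funext x
    simp only [hd₂def, hc₂def]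
    split_ifs <;> simp [ENNReal.ofReal]
  -- real versions of the densities
  set e₁ : Ω → ℝ := fun x => if b₀ < f x then 2 else if f x = b₀ then 2 * α else 0 with he₁def
  set e₂ : Ω → ℝ := fun x =>
    if f x < b₀ then 2 else if f x = b₀ then 2 * (1 - α) else 0 with he₂def
  have hcoe₁ : ∀ x, ((c₁ x : ℝ)) = e₁ x := by
    intro x
    simp only [hc₁def, he₁def]
    split_ifs <;> simp [Real.coe_toNNReal _ (by linarith : (0:ℝ) ≤ 2 * α)]
  have hcoe₂ : ∀ x, ((c₂ x : ℝ)) = e₂ x := by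
    intro x
    simp only [hc₂def, he₂def]
    split_ifs <;> simp [Real.coe_toNNReal _ (by linarith : (0:ℝ) ≤ 2 * (1 - α))]
  have he₁m : Measurable e₁ :=
    Measurable.ite (measurableSet_lt measurable_const hf) measurable_const
      (Measurable.ite hEq measurable_const measurable_const)
  have he₂m : Measurable e₂ :=
    Measurable.ite (measurableSet_lt hf measurable_const) measurable_const
      (Measurable.ite hEq measurable_const measurable_const)
  have he₁b : ∀ x, ‖e₁ x‖ ≤ 2 := by
    intro x
    simp only [he₁def, Real.norm_eq_abs]
    split_ifs <;> rw [abs_of_nonneg (by linarith)] <;> linarith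
  have he₂b : ∀ x, ‖e₂ x‖ ≤ 2 := by
    intro x
    simp only [he₂def, Real.norm_eq_abs]
    split_ifs <;> rw [abs_of_nonneg (by linarith)] <;> linarith
  -- integrals with respect to μ₁ and μ₂
  have hI₁ : ∫ x, f x ∂μ₁ = ∫ x, e₁ x * f x ∂μ := by
    rw [hco₁, integral_withDensity_eq_integral_smul hc₁]
    congr 1; funext x; rw [NNReal.smul_def, hcoe₁, smul_eq_mul]
  have hI₂ : ∫ x, f x ∂μ₂ = ∫ x, e₂ x * f x ∂μ := by
    rw [hco₂, integral_withDensity_eq_integral_smul hc₂]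
    congr 1; funext x; rw [NNReal.smul_def, hcoe₂, smul_eq_mul]
  have hN₁ : ∫ x, e₁ x ∂μ = 1 := by
    have h1' : (μ.withDensity fun x => (c₁ x : ENNReal)) Set.univ = 1 := by rw [← hco₁]; exact h1
    calc ∫ x, e₁ x ∂μ = ∫ x, c₁ x • (1:ℝ) ∂μ := by
          congr 1; funext x; rw [NNReal.smul_def, hcoe₁, smul_eq_mul, mul_one]
      _ = ∫ _x, (1:ℝ) ∂(μ.withDensity fun x => (c₁ x : ENNReal)) :=
          (integral_withDensity_eq_integral_smul hc₁ _).symm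
      _ = 1 := by simp [measureReal_def, h1']
  have hN₂ : ∫ x, e₂ x ∂μ = 1 := by
    have h2' : (μ.withDensity fun x => (c₂ x : ENNReal)) Set.univ = 1 := by rw [← hco₂]; exact h2
    calc ∫ x, e₂ x ∂μ = ∫ x, c₂ x • (1:ℝ) ∂μ := by
          congr 1; funext x; rw [NNReal.smul_def, hcoe₂, smul_eq_mul, mul_one]
      _ = ∫ _x, (1:ℝ) ∂(μ.withDensity fun x => (c₂ x : ENNReal)) :=
          (integral_withDensity_eq_integral_smul hc₂ _).symm
      _ = 1 := by simp [measureReal_def, h2']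
  -- integrability
  have hfint₁ : Integrable (fun x => e₁ x * f x) μ :=
    hint.bdd_mul he₁m.aestronglyMeasurable (Filter.Eventually.of_forall he₁b)
  have hfint₂ : Integrable (fun x => e₂ x * f x) μ :=
    hint.bdd_mul he₂m.aestronglyMeasurable (Filter.Eventually.of_forall he₂b)
  have he₁int : Integrable e₁ μ := by
    simpa using (integrable_const (1:ℝ)).bdd_mul he₁m.aestronglyMeasurable (Filter.Eventually.of_forall he₁b)
  have he₂int : Integrable e₂ μ := by
    simpa using (integrable_const (1:ℝ)).bdd_mul he₂m.aestronglyMeasurable (Filter.Eventually.of_forall he₂b)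
  have habs : Integrable (fun x => |f x - b₀|) μ := (hint.sub (integrable_const b₀)).abs
  -- the key difference identity
  have hpt : ∀ x, e₁ x * f x - e₂ x * f x = 2 * |f x - b₀| + (b₀ * e₁ x - b₀ * e₂ x) := by
    intro x
    rcases lt_trichotomy (f x) b₀ with h | h | h
    · have E1 : e₁ x = 0 := by
        simp only [he₁def]
        rw [if_neg (by linarith), if_neg (by intro he; linarith)]
      have E2 : e₂ x = 2 := by simp only [he₂def]; rw [if_pos h]
      rw [E1, E2, abs_of_neg (by linarith : f x - b₀ < 0)]
      ring
    · have E1 : e₁ x = 2 * α := by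
        simp only [he₁def]; rw [if_neg (by simp [h]), if_pos h]
      have E2 : e₂ x = 2 * (1 - α) := by
        simp only [he₂def]; rw [if_neg (by simp [h]), if_pos h]
      rw [E1, E2, h, sub_self, abs_zero]
      ring
    · have E1 : e₁ x = 2 := by simp only [he₁def]; rw [if_pos h]
      have E2 : e₂ x = 0 := by
        simp only [he₂def]
        rw [if_neg (by linarith), if_neg (by intro he; linarith)]
      rw [E1, E2, abs_of_pos (by linarith : 0 < f x - b₀)]
      ring
  have hdiff : (∫ x, f x ∂μ₁) - ∫ x, f x ∂μ₂ = 2 * ∫ x, |f x - b₀| ∂μ := by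
    rw [hI₁, hI₂, ← integral_sub hfint₁ hfint₂]
    calc ∫ x, (e₁ x * f x - e₂ x * f x) ∂μ
        = ∫ x, (2 * |f x - b₀| + (b₀ * e₁ x - b₀ * e₂ x)) ∂μ :=
          integral_congr_ae (Filter.Eventually.of_forall hpt)
      _ = ∫ x, 2 * |f x - b₀| ∂μ + (∫ x, b₀ * e₁ x ∂μ - ∫ x, b₀ * e₂ x ∂μ) := by
          have hsubint : Integrable (fun x => b₀ * e₁ x - b₀ * e₂ x) μ := by
            have := (he₁int.const_mul b₀).sub (he₂int.const_mul b₀)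
            simpa [Pi.sub_def] using this
          rw [integral_add (habs.const_mul 2) hsubint,
            integral_sub (he₁int.const_mul b₀) (he₂int.const_mul b₀)]
      _ = 2 * ∫ x, |f x - b₀| ∂μ := by
          rw [int_cmul, int_cmul, int_cmul, hN₁, hN₂]; ring
  -- the infimum equals the value at the median
  have hlow : ∀ b, ∫ x, |f x - b₀| ∂μ ≤ ∫ x, |f x - b| ∂μ := by
    intro b
    rcases le_total b₀ b with h | h
    · exact median_key μ f hf hint b₀ b h hmed2
    · have hset : {x | -f x ≤ -b₀} = {x | b₀ ≤ f x} := by ext x; simp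
      have key := median_key μ (fun x => -f x) hf.neg hint.neg (-b₀) (-b) (by linarith)
        (by rw [hset]; exact hmed1)
      simp only [neg_sub_neg, abs_sub_comm b₀, abs_sub_comm b] at key
      exact key
  have hInf : (⨅ b : ℝ, ∫ x, |f x - b| ∂μ) = ∫ x, |f x - b₀| ∂μ := by
    refine le_antisymm (ciInf_le ⟨0, ?_⟩ b₀) (le_ciInf hlow)
    rintro r ⟨b, rfl⟩
    exact integral_nonneg fun x => abs_nonneg _
  have hA : 0 ≤ ∫ x, |f x - b₀| ∂μ := integral_nonneg fun x => abs_nonneg _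
  rw [hdiff, hInf, abs_of_nonneg (by linarith)]
  ring

end
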